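/- With χ(ω) = (1/√(2π)) e^{−ω²/2} and M(ξ) = (A/c) χ((ξ−u)/c), the microscopic energy E(M) = ∫_ℝ [ξ²/2 · M + c² M ln M + gZ M + c² ln(c√(2π)) M] dξ equals the macroscopic entropy E(A,Q,Z) = Q²/(2A) + gAZ + c²A ln A, where Q = Au. -/

import Mathlib

open MeasureTheory Real

lemma aux_odd_gaussian (b : ℝ) : ∫ y : ℝ, y * Real.exp (-b * y ^ 2) = 0 := by
  have h := MeasureTheory.integral_neg_eq_self (fun y : ℝ => y * Real.exp (-b * y ^ 2))
    (volume : Measure ℝ)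
  simp only [neg_sq, neg_mul] at h
  rw [integral_neg] at h
  simp only [neg_mul]
  linarith

/-- The microscopic energy of the Gaussian Gibbs equilibrium equals the macroscopic
entropy: `E(M) = Q²/(2A) + gAZ + c²A ln A`, where `Q = Au`. -/
theorem microscopic_energy_eq_entropy (c g Z : ℝ) (hc : 0 < c) (hg : 0 < g)
    (A u Q : ℝ) (hA : 0 < A) (hQ : Q = A * u) :
    let M : ℝ → ℝ := fun ξ => A / c * (1 / Real.sqrt (2 * π) * Real.exp (-((ξ - u) / c) ^ 2 / 2))
    (∫ ξ, ξ ^ 2 / 2 * M ξ + c ^ 2 * M ξ * Real.log (M ξ)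
        + g * Z * M ξ + c ^ 2 * Real.log (c * Real.sqrt (2 * π)) * M ξ)
      = Q ^ 2 / (2 * A) + g * A * Z + c ^ 2 * A * Real.log A := by
  intro M
  have hsqrt : (0:ℝ) < Real.sqrt (2 * π) := Real.sqrt_pos.mpr (by positivity)
  set s : ℝ := Real.sqrt (2 * π) with hs
  set K : ℝ := -u ^ 2 / 2 + c ^ 2 * Real.log A + g * Z with hK
  set b : ℝ := 1 / (2 * c ^ 2) with hb
  have hbpos : 0 < b := by positivity
  have hcb : c ^ 2 * b = 1 / 2 := by
    rw [hb]; field_simp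
  -- pointwise rewrite of the integrand
  have hpt : ∀ ξ : ℝ, ξ ^ 2 / 2 * M ξ + c ^ 2 * M ξ * Real.log (M ξ)
      + g * Z * M ξ + c ^ 2 * Real.log (c * s) * M ξ
      = A / (c * s) *
        ((u * (ξ - u) + (u ^ 2 + K)) * Real.exp (-b * (ξ - u) ^ 2)) := by
    intro ξ
    have harg : -((ξ - u) / c) ^ 2 / 2 = -b * (ξ - u) ^ 2 := by
      rw [hb]; field_simp
    have hM : M ξ = A / (c * s) * Real.exp (-b * (ξ - u) ^ 2) := by
      show A / c * (1 / s * Real.exp (-((ξ - u) / c) ^ 2 / 2)) = _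
      rw [harg]; ring
    have hlog : Real.log (A / (c * s) * Real.exp (-b * (ξ - u) ^ 2)) =
        Real.log A - Real.log (c * s) + (-b * (ξ - u) ^ 2) := by
      rw [Real.log_mul (by positivity) (Real.exp_ne_zero _),
        Real.log_div (ne_of_gt hA) (by positivity), Real.log_exp]
    rw [hM, hlog, hK]
    linear_combination (-(A / (c * s) * Real.exp (-b * (ξ - u) ^ 2)) * (ξ - u) ^ 2) * hcb
  rw [integral_congr_ae (Filter.Eventually.of_forall hpt)]
  rw [MeasureTheory.integral_const_mul]
  have hshift : (∫ ξ : ℝ, (u * (ξ - u) + (u ^ 2 + K)) * Real.exp (-b * (ξ - u) ^ 2))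
      = ∫ y : ℝ, (u * y + (u ^ 2 + K)) * Real.exp (-b * y ^ 2) :=
    MeasureTheory.integral_sub_right_eq_self
      (fun y : ℝ => (u * y + (u ^ 2 + K)) * Real.exp (-b * y ^ 2)) u
  rw [hshift]
  have hint1 : Integrable (fun y : ℝ => u * y * Real.exp (-b * y ^ 2)) := by
    have := (integrable_mul_exp_neg_mul_sq hbpos).const_mul u
    simpa [mul_assoc] using this
  have hint2 : Integrable (fun y : ℝ => (u ^ 2 + K) * Real.exp (-b * y ^ 2)) :=
    (integrable_exp_neg_mul_sq hbpos).const_mul _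
  have hsplit : (∫ y : ℝ, (u * y + (u ^ 2 + K)) * Real.exp (-b * y ^ 2))
      = (∫ y : ℝ, u * y * Real.exp (-b * y ^ 2))
        + ∫ y : ℝ, (u ^ 2 + K) * Real.exp (-b * y ^ 2) := by
    rw [← integral_add hint1 hint2]
    congr 1
    funext y
    ring
  rw [hsplit]
  have h1 : (∫ y : ℝ, u * y * Real.exp (-b * y ^ 2)) = 0 := by
    rw [show (fun y : ℝ => u * y * Real.exp (-b * y ^ 2))
        = fun y : ℝ => u * (y * Real.exp (-b * y ^ 2)) by funext y; ring]
    rw [MeasureTheory.integral_const_mul, aux_odd_gaussian b, mul_zero]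
  have h2 : (∫ y : ℝ, Real.exp (-b * y ^ 2)) = c * s := by
    rw [integral_gaussian]
    rw [show π / b = (2 * π) * c ^ 2 by rw [hb]; field_simp]
    rw [hs, Real.sqrt_mul (by positivity), Real.sqrt_sq hc.le]
    ring
  rw [h1, MeasureTheory.integral_const_mul, h2]
  have hcs : c * s ≠ 0 := by positivity
  rw [hK, hQ]
  field_simp
  ring
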